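/- arXiv:1702.00152 — 4 statements merged into one kernel-verified Lean document; each statement's English description precedes it below -/
import Mathlib

section
/- Put–call parity holds for the MFM pricing formulas: for all 0≤t<T and S>0, C(t,S) − P(t,S) = S − K·e^{−r(T−t)}. -/
open MeasureTheory ProbabilityTheory Real Filter

/-- The standard normal cumulative distribution function `Φ`. -/
noncomputable def stdNormalCDF (x : ℝ) : ℝ :=
  ((ProbabilityTheory.gaussianReal 0 1) (Set.Iic x)).toReal

lemma stdNormalCDF_neg (x : ℝ) : stdNormalCDF (-x) = 1 - stdNormalCDF x := by
  have hmap : (gaussianReal 0 1).map (fun y : ℝ => (-1) * y) = gaussianReal 0 1 := by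
    rw [gaussianReal_map_const_mul (-1)]
    norm_num
  have h1 : gaussianReal 0 1 (Set.Iic (-x)) = gaussianReal 0 1 (Set.Ici x) := by
    conv_lhs => rw [← hmap]
    rw [Measure.map_apply (by fun_prop) measurableSet_Iic]
    congr 1
    ext y
    simp [neg_le]
  have h2 : gaussianReal 0 1 (Set.Ici x) = gaussianReal 0 1 (Set.Ioi x) := by
    rw [← Set.Ioi_union_left, measure_union _ (measurableSet_singleton x)]
    · have : gaussianReal 0 1 {x} = 0 := by
        refine gaussianReal_absolutelyContinuous 0 (by norm_num) ?_
        simp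
      simp [this]
    · simp
  have h3 : gaussianReal 0 1 (Set.Iic x) + gaussianReal 0 1 (Set.Ioi x) = 1 := by
    rw [← measure_union (by simp [Set.disjoint_left]) measurableSet_Ioi,
      Set.Iic_union_Ioi, measure_univ]
  have hfin : gaussianReal 0 1 (Set.Iic x) ≠ ⊤ := measure_ne_top _ _
  have hfin2 : gaussianReal 0 1 (Set.Ioi x) ≠ ⊤ := measure_ne_top _ _
  unfold stdNormalCDF
  rw [h1, h2]
  have := congrArg ENNReal.toReal h3
  rw [ENNReal.toReal_add hfin hfin2] at this
  simp at this
  linarith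

lemma abs_mix_bound {A B a b : ℝ} (hA : 0 ≤ A) (hB : 0 ≤ B)
    (ha0 : 0 ≤ a) (ha1 : a ≤ 1) (hb0 : 0 ≤ b) (hb1 : b ≤ 1) :
    |A * a - B * b| ≤ A + B := by
  rw [abs_sub_le_iff]
  constructor <;> nlinarith

/-- Put–call parity for the MFM pricing formulas: `C(t,S) - P(t,S) = S - K e^{-r(T-t)}`. -/
theorem mfm_put_call_parity
    (S K r t T σ σH Hu μJ σJ lam k δt : ℝ)
    (hS : 0 < S) (hK : 0 < K) (ht : 0 ≤ t) (htT : t < T)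
    (hσ : 0 < σ) (hσH : 0 < σH) (hH1 : 3 / 4 < Hu) (hH2 : Hu < 1)
    (hσJ : 0 < σJ) (hlam : 0 < lam) (hk : 0 ≤ k) (hδt : 0 < δt)
    (σhat2 lam' : ℝ)
    (hσhat2 : σhat2 = σ ^ 2 + σH ^ 2 * δt ^ (2 * Hu - 1)
      + k * Real.sqrt ((2 / Real.pi) * (σ ^ 2 / δt + σH ^ 2 * δt ^ (2 * Hu - 2))))
    (hlam' : lam' = lam * Real.exp (μJ + σJ ^ 2 / 2))
    (σn rn d1 d2 w : ℕ → ℝ)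
    (hσn : ∀ n, σn n = Real.sqrt (σhat2 + n * σJ ^ 2 / (T - t)))
    (hrn : ∀ n, rn n = r - lam * (Real.exp (μJ + σJ ^ 2 / 2) - 1)
      + n * (μJ + σJ ^ 2 / 2) / (T - t))
    (hd1 : ∀ n, d1 n = (Real.log (S / K) + rn n * (T - t) + (σn n) ^ 2 * (T - t) / 2)
      / (σn n * Real.sqrt (T - t)))
    (hd2 : ∀ n, d2 n = d1 n - σn n * Real.sqrt (T - t))
    (hw : ∀ n, w n = Real.exp (-lam' * (T - t)) * (lam' * (T - t)) ^ n / n.factorial)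
    (C P : ℝ)
    (hC : C = ∑' n, w n
      * (S * stdNormalCDF (d1 n) - K * Real.exp (-r * (T - t)) * stdNormalCDF (d2 n)))
    (hP : P = ∑' n, w n
      * (K * Real.exp (-r * (T - t)) * stdNormalCDF (-(d2 n)) - S * stdNormalCDF (-(d1 n)))) :
    C - P = S - K * Real.exp (-r * (T - t)) := by
  set x := lam' * (T - t) with hx
  set E := K * Real.exp (-r * (T - t)) with hE
  -- summability of weights
  have hwdef : w = fun n => Real.exp (-x) * (x ^ n / n.factorial) := by
    funext n; rw [hw n, hx]; ring
  have hwsum : Summable w := by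
    rw [hwdef]
    exact (Real.summable_pow_div_factorial x).mul_left _
  have hwtsum : ∑' n, w n = 1 := by
    rw [hwdef, tsum_mul_left]
    have : ∑' n : ℕ, x ^ n / n.factorial = Real.exp x := by
      rw [Real.exp_eq_exp_ℝ, NormedSpace.exp_eq_tsum_div]
    rw [this, ← Real.exp_add]
    simp
  -- bounds on Φ
  have hΦ0 : ∀ y : ℝ, 0 ≤ stdNormalCDF y := fun y => ENNReal.toReal_nonneg
  have hΦ1 : ∀ y : ℝ, stdNormalCDF y ≤ 1 := by
    intro y
    unfold stdNormalCDF
    rw [← ENNReal.toReal_one]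
    exact ENNReal.toReal_mono ENNReal.one_ne_top prob_le_one
  have hwnn : ∀ n, 0 ≤ w n := by
    intro n
    simp only [hwdef]
    have hx0 : (0:ℝ) < lam' := by
      rw [hlam']; positivity
    have : (0:ℝ) ≤ x := by
      rw [hx]; nlinarith
    positivity
  -- summability of the series
  have hEpos : 0 < E := by positivity
  have hCsum : Summable (fun n => w n
      * (S * stdNormalCDF (d1 n) - E * stdNormalCDF (d2 n))) := by
    apply Summable.of_norm_bounded (hwsum.mul_right (S + E))
    intro n
    rw [norm_mul, Real.norm_of_nonneg (hwnn n)]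
    apply mul_le_mul_of_nonneg_left _ (hwnn n)
    exact abs_mix_bound hS.le hEpos.le (hΦ0 _) (hΦ1 _) (hΦ0 _) (hΦ1 _)
  have hPsum : Summable (fun n => w n
      * (E * stdNormalCDF (-(d2 n)) - S * stdNormalCDF (-(d1 n)))) := by
    apply Summable.of_norm_bounded (hwsum.mul_right (S + E))
    intro n
    rw [norm_mul, Real.norm_of_nonneg (hwnn n)]
    apply mul_le_mul_of_nonneg_left _ (hwnn n)
    have h := abs_mix_bound hEpos.le hS.le (hΦ0 (-(d2 n))) (hΦ1 _) (hΦ0 (-(d1 n))) (hΦ1 _)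
    rw [Real.norm_eq_abs]
    linarith
  rw [hC, hP, ← Summable.tsum_sub hCsum hPsum]
  have key : ∀ n, w n * (S * stdNormalCDF (d1 n) - E * stdNormalCDF (d2 n))
      - w n * (E * stdNormalCDF (-(d2 n)) - S * stdNormalCDF (-(d1 n)))
      = w n * (S - E) := by
    intro n
    rw [stdNormalCDF_neg (d1 n), stdNormalCDF_neg (d2 n)]
    ring
  calc ∑' n, (w n * (S * stdNormalCDF (d1 n) - E * stdNormalCDF (d2 n))
      - w n * (E * stdNormalCDF (-(d2 n)) - S * stdNormalCDF (-(d1 n))))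
      = ∑' n, w n * (S - E) := by exact tsum_congr key
    _ = (∑' n, w n) * (S - E) := tsum_mul_right
    _ = S - E := by rw [hwtsum, one_mul]
end

section
/- The MFM call price satisfies the large-asset boundary condition: for fixed 0≤t<T, C(t,S)/S → 1 as S → ∞. -/
open MeasureTheory ProbabilityTheory Real Filter

lemma stdNormalCDF_eq_cdf (x : ℝ) :
    stdNormalCDF x = ProbabilityTheory.cdf (ProbabilityTheory.gaussianReal 0 1) x :=
  (ProbabilityTheory.cdf_eq_real _ x).symm

lemma stdNormalCDF_nonneg (x : ℝ) : 0 ≤ stdNormalCDF x := by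
  rw [stdNormalCDF_eq_cdf]; exact ProbabilityTheory.cdf_nonneg _ x

lemma stdNormalCDF_le_one (x : ℝ) : stdNormalCDF x ≤ 1 := by
  rw [stdNormalCDF_eq_cdf]; exact ProbabilityTheory.cdf_le_one _ x

lemma stdNormalCDF_tendsto : Tendsto stdNormalCDF atTop (nhds 1) := by
  have := ProbabilityTheory.tendsto_cdf_atTop (ProbabilityTheory.gaussianReal 0 1)
  exact this.congr fun x => (stdNormalCDF_eq_cdf x).symm

lemma tsum_exp_series (x : ℝ) : ∑' n : ℕ, x ^ n / n.factorial = Real.exp x := by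
  rw [Real.exp_eq_exp_ℝ, NormedSpace.exp_eq_tsum_div]

/-- Large-asset boundary condition for the MFM call price: `C(t,S)/S → 1` as `S → ∞`. -/
theorem mfm_call_large_asset_boundary
    (K r t T σ σH Hu μJ σJ lam k δt : ℝ)
    (hK : 0 < K) (ht : 0 ≤ t) (htT : t < T)
    (hσ : 0 < σ) (hσH : 0 < σH) (hH1 : 3 / 4 < Hu) (hH2 : Hu < 1)
    (hσJ : 0 < σJ) (hlam : 0 < lam) (hk : 0 ≤ k) (hδt : 0 < δt)
    (σhat2 lam' : ℝ)
    (hσhat2 : σhat2 = σ ^ 2 + σH ^ 2 * δt ^ (2 * Hu - 1)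
      + k * Real.sqrt ((2 / Real.pi) * (σ ^ 2 / δt + σH ^ 2 * δt ^ (2 * Hu - 2))))
    (hlam' : lam' = lam * Real.exp (μJ + σJ ^ 2 / 2))
    (σn rn w : ℕ → ℝ) (d1 d2 : ℕ → ℝ → ℝ)
    (hσn : ∀ n, σn n = Real.sqrt (σhat2 + n * σJ ^ 2 / (T - t)))
    (hrn : ∀ n, rn n = r - lam * (Real.exp (μJ + σJ ^ 2 / 2) - 1)
      + n * (μJ + σJ ^ 2 / 2) / (T - t))
    (hd1 : ∀ n S, 0 < S → d1 n S = (Real.log (S / K) + rn n * (T - t)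
      + (σn n) ^ 2 * (T - t) / 2) / (σn n * Real.sqrt (T - t)))
    (hd2 : ∀ n S, 0 < S → d2 n S = d1 n S - σn n * Real.sqrt (T - t))
    (hw : ∀ n, w n = Real.exp (-lam' * (T - t)) * (lam' * (T - t)) ^ n / n.factorial)
    (C : ℝ → ℝ)
    (hC : ∀ S, 0 < S → C S = ∑' n, w n
      * (S * stdNormalCDF (d1 n S) - K * Real.exp (-r * (T - t)) * stdNormalCDF (d2 n S))) :
    Tendsto (fun S => C S / S) atTop (nhds 1) := by
  have hτ : 0 < T - t := sub_pos.mpr htT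
  have hσhatpos : 0 < σhat2 := by
    rw [hσhat2]
    have h1 : (0:ℝ) < δt ^ (2 * Hu - 1) := Real.rpow_pos_of_pos hδt _
    have h2 : 0 ≤ k * Real.sqrt ((2 / Real.pi) * (σ ^ 2 / δt + σH ^ 2 * δt ^ (2 * Hu - 2))) :=
      mul_nonneg hk (Real.sqrt_nonneg _)
    positivity
  have hσnpos : ∀ n, 0 < σn n := fun n => by
    rw [hσn]
    apply Real.sqrt_pos.mpr
    have : 0 ≤ (n : ℝ) * σJ ^ 2 / (T - t) := by positivity
    linarith
  have hlam'pos : 0 < lam' := by rw [hlam']; positivity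
  set x := lam' * (T - t) with hx
  have hxpos : 0 < x := mul_pos hlam'pos hτ
  have hwpos : ∀ n, 0 < w n := fun n => by
    rw [hw]; positivity
  set c0 := K * Real.exp (-r * (T - t)) with hc0
  have hc0pos : 0 < c0 := by positivity
  -- summability of `w`
  have hwsum : Summable w := by
    have := (Real.summable_pow_div_factorial x).mul_left (Real.exp (-x))
    apply this.congr
    intro n
    rw [hw, hx, mul_div_assoc, neg_mul]
  -- tsum of w is 1
  have hwtsum : ∑' n, w n = 1 := by
    have h1 : ∑' n, w n = Real.exp (-x) * ∑' n : ℕ, x ^ n / n.factorial := by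
      rw [← tsum_mul_left]
      congr 1; funext n; rw [hw, hx, mul_div_assoc, neg_mul]
    rw [h1, tsum_exp_series, ← Real.exp_add, neg_add_cancel, Real.exp_zero]
  -- d1, d2 tend to atTop
  have hd1top : ∀ n, Tendsto (fun S => d1 n S) atTop atTop := by
    intro n
    have hb : 0 < σn n * Real.sqrt (T - t) := mul_pos (hσnpos n) (Real.sqrt_pos.mpr hτ)
    have h1 : Tendsto (fun S : ℝ => (Real.log S + (rn n * (T - t)
        + (σn n) ^ 2 * (T - t) / 2 - Real.log K)) / (σn n * Real.sqrt (T - t))) atTop atTop :=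
      (tendsto_atTop_add_const_right atTop _ Real.tendsto_log_atTop).atTop_div_const hb
    apply h1.congr'
    filter_upwards [eventually_gt_atTop (0:ℝ)] with S hS
    rw [hd1 n S hS, Real.log_div hS.ne' hK.ne']
    ring
  have hd2top : ∀ n, Tendsto (fun S => d2 n S) atTop atTop := by
    intro n
    have h1 := tendsto_atTop_add_const_right atTop (-(σn n * Real.sqrt (T - t))) (hd1top n)
    apply h1.congr'
    filter_upwards [eventually_gt_atTop (0:ℝ)] with S hS
    rw [hd2 n S hS]
    exact (sub_eq_add_neg _ _).symm
  -- per-term functions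
  set f : ℝ → ℕ → ℝ := fun S n => w n
    * (S * stdNormalCDF (d1 n S) - c0 * stdNormalCDF (d2 n S)) / S with hf
  have hfeq : ∀ S : ℝ, 0 < S → ∀ n, f S n
      = w n * (stdNormalCDF (d1 n S) - c0 / S * stdNormalCDF (d2 n S)) := by
    intro S hS n
    have hS' : S ≠ 0 := hS.ne'
    rw [hf]
    field_simp
  -- pointwise limits
  have hterm : ∀ n, Tendsto (fun S => f S n) atTop (nhds (w n)) := by
    intro n
    have hΦ1 : Tendsto (fun S => stdNormalCDF (d1 n S)) atTop (nhds 1) :=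
      stdNormalCDF_tendsto.comp (hd1top n)
    have hΦ2 : Tendsto (fun S => c0 / S * stdNormalCDF (d2 n S)) atTop (nhds 0) := by
      apply squeeze_zero_norm' (a := fun S => c0 / S)
      · filter_upwards [eventually_ge_atTop (1:ℝ)] with S hS
        have hS0 : (0:ℝ) < S := lt_of_lt_of_le one_pos hS
        rw [norm_mul, Real.norm_eq_abs, Real.norm_eq_abs,
          abs_of_nonneg (stdNormalCDF_nonneg _), abs_of_pos (by positivity : 0 < c0 / S)]
        calc c0 / S * stdNormalCDF (d2 n S) ≤ c0 / S * 1 := by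
              apply mul_le_mul_of_nonneg_left (stdNormalCDF_le_one _) (by positivity)
          _ = c0 / S := mul_one _
      · exact tendsto_const_nhds.div_atTop tendsto_id
    have := ((hΦ1.sub hΦ2).const_mul (w n)).congr'
      (by filter_upwards [eventually_gt_atTop (0:ℝ)] with S hS; exact (hfeq S hS n).symm)
    simpa using this
  -- uniform bound
  have hbound : ∀ᶠ S in atTop, ∀ n, ‖f S n‖ ≤ w n * (1 + c0) := by
    filter_upwards [eventually_ge_atTop (1:ℝ)] with S hS n
    have hS0 : (0:ℝ) < S := lt_of_lt_of_le one_pos hS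
    rw [hfeq S hS0 n, norm_mul, Real.norm_eq_abs, Real.norm_eq_abs,
      abs_of_pos (hwpos n)]
    apply mul_le_mul_of_nonneg_left _ (hwpos n).le
    have h1 : |stdNormalCDF (d1 n S) - c0 / S * stdNormalCDF (d2 n S)|
        ≤ |stdNormalCDF (d1 n S)| + |c0 / S * stdNormalCDF (d2 n S)| := abs_sub _ _
    have h2 : |stdNormalCDF (d1 n S)| ≤ 1 := by
      rw [abs_of_nonneg (stdNormalCDF_nonneg _)]; exact stdNormalCDF_le_one _
    have h3 : |c0 / S * stdNormalCDF (d2 n S)| ≤ c0 := by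
      rw [abs_mul, abs_of_nonneg (stdNormalCDF_nonneg _),
        abs_of_pos (by positivity : (0:ℝ) < c0 / S)]
      calc c0 / S * stdNormalCDF (d2 n S) ≤ c0 / S * 1 :=
            mul_le_mul_of_nonneg_left (stdNormalCDF_le_one _) (by positivity)
        _ = c0 / S := mul_one _
        _ ≤ c0 / 1 := by apply div_le_div_of_nonneg_left hc0pos.le one_pos hS
        _ = c0 := div_one _
    linarith
  -- dominated convergence
  have hsum_bound : Summable (fun n => w n * (1 + c0)) := hwsum.mul_right _
  have hmain : Tendsto (fun S => ∑' n, f S n) atTop (nhds (∑' n, w n)) :=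
    tendsto_tsum_of_dominated_convergence hsum_bound hterm hbound
  rw [hwtsum] at hmain
  apply hmain.congr'
  filter_upwards [eventually_gt_atTop (0:ℝ)] with S hS
  rw [hC S hS, ← tsum_div_const]
end

section
/- The MFM call price satisfies the zero-asset boundary condition: for fixed 0≤t<T, C(t,S) → 0 as S → 0⁺. -/
open MeasureTheory ProbabilityTheory Real Filter

/-- Zero-asset boundary condition for the MFM call price: `C(t,S) → 0` as `S → 0⁺`. -/
theorem mfm_call_zero_asset_boundary
    (K r t T σ σH Hu μJ σJ lam k δt : ℝ)
    (hK : 0 < K) (ht : 0 ≤ t) (htT : t < T)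
    (hσ : 0 < σ) (hσH : 0 < σH) (hH1 : 3 / 4 < Hu) (hH2 : Hu < 1)
    (hσJ : 0 < σJ) (hlam : 0 < lam) (hk : 0 ≤ k) (hδt : 0 < δt)
    (σhat2 lam' : ℝ)
    (hσhat2 : σhat2 = σ ^ 2 + σH ^ 2 * δt ^ (2 * Hu - 1)
      + k * Real.sqrt ((2 / Real.pi) * (σ ^ 2 / δt + σH ^ 2 * δt ^ (2 * Hu - 2))))
    (hlam' : lam' = lam * Real.exp (μJ + σJ ^ 2 / 2))
    (σn rn w : ℕ → ℝ) (d1 d2 : ℕ → ℝ → ℝ)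
    (hσn : ∀ n, σn n = Real.sqrt (σhat2 + n * σJ ^ 2 / (T - t)))
    (hrn : ∀ n, rn n = r - lam * (Real.exp (μJ + σJ ^ 2 / 2) - 1)
      + n * (μJ + σJ ^ 2 / 2) / (T - t))
    (hd1 : ∀ n S, 0 < S → d1 n S = (Real.log (S / K) + rn n * (T - t)
      + (σn n) ^ 2 * (T - t) / 2) / (σn n * Real.sqrt (T - t)))
    (hd2 : ∀ n S, 0 < S → d2 n S = d1 n S - σn n * Real.sqrt (T - t))
    (hw : ∀ n, w n = Real.exp (-lam' * (T - t)) * (lam' * (T - t)) ^ n / n.factorial)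
    (C : ℝ → ℝ)
    (hC : ∀ S, 0 < S → C S = ∑' n, w n
      * (S * stdNormalCDF (d1 n S) - K * Real.exp (-r * (T - t)) * stdNormalCDF (d2 n S))) :
    Tendsto C (nhdsWithin 0 (Set.Ioi 0)) (nhds 0) := by
  have hTt : (0:ℝ) < T - t := sub_pos.2 htT
  -- basic facts about stdNormalCDF
  have hΦeq : ∀ x, stdNormalCDF x = ProbabilityTheory.cdf (gaussianReal 0 1) x := fun x =>
    (ProbabilityTheory.cdf_eq_real _ x).symm
  have hΦ0 : ∀ x, 0 ≤ stdNormalCDF x := fun x => by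
    rw [hΦeq]; exact ProbabilityTheory.cdf_nonneg _ x
  have hΦ1 : ∀ x, stdNormalCDF x ≤ 1 := fun x => by
    rw [hΦeq]; exact ProbabilityTheory.cdf_le_one _ x
  have hΦbot : Tendsto stdNormalCDF atBot (nhds 0) := by
    have := ProbabilityTheory.tendsto_cdf_atBot (gaussianReal 0 1)
    exact this.congr fun x => (hΦeq x).symm
  -- positivity of σn
  have hσhat2pos : 0 < σhat2 := by
    rw [hσhat2]
    have h1 : 0 < σ ^ 2 := pow_pos hσ 2
    have h2 : 0 ≤ σH ^ 2 * δt ^ (2 * Hu - 1) :=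
      mul_nonneg (sq_nonneg _) (Real.rpow_nonneg hδt.le _)
    have h3 : 0 ≤ k * Real.sqrt ((2 / Real.pi) * (σ ^ 2 / δt + σH ^ 2 * δt ^ (2 * Hu - 2))) :=
      mul_nonneg hk (Real.sqrt_nonneg _)
    linarith
  have hσnpos : ∀ n, 0 < σn n := fun n => by
    rw [hσn]
    apply Real.sqrt_pos.2
    have : 0 ≤ (n:ℝ) * σJ ^ 2 / (T - t) :=
      div_nonneg (mul_nonneg (Nat.cast_nonneg n) (sq_nonneg _)) hTt.le
    linarith
  have hlam'pos : 0 < lam' := by rw [hlam']; positivity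
  -- w is nonnegative
  have hwpos : ∀ n, 0 ≤ w n := fun n => by
    rw [hw]; positivity
  -- tendsto of d1, d2 to atBot
  have hd1bot : ∀ n, Tendsto (fun S => d1 n S) (nhdsWithin 0 (Set.Ioi 0)) atBot := by
    intro n
    have hformula : Tendsto (fun S : ℝ => (Real.log (S / K) + rn n * (T - t)
        + (σn n) ^ 2 * (T - t) / 2) / (σn n * Real.sqrt (T - t)))
        (nhdsWithin 0 (Set.Ioi 0)) atBot := by
      apply Tendsto.atBot_div_const (mul_pos (hσnpos n) (Real.sqrt_pos.2 hTt))
      apply tendsto_atBot_add_const_right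
      apply tendsto_atBot_add_const_right
      have : Tendsto (fun S : ℝ => Real.log S - Real.log K) (nhdsWithin 0 (Set.Ioi 0)) atBot :=
        tendsto_atBot_add_const_right _ _ Real.tendsto_log_nhdsGT_zero
      apply this.congr'
      filter_upwards [self_mem_nhdsWithin] with S hS
      rw [Real.log_div (ne_of_gt hS) (ne_of_gt hK)]
    apply hformula.congr'
    filter_upwards [self_mem_nhdsWithin] with S hS
    exact (hd1 n S hS).symm
  have hd2bot : ∀ n, Tendsto (fun S => d2 n S) (nhdsWithin 0 (Set.Ioi 0)) atBot := by
    intro n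
    have : Tendsto (fun S => d1 n S - σn n * Real.sqrt (T - t))
        (nhdsWithin 0 (Set.Ioi 0)) atBot := tendsto_atBot_add_const_right _ _ (hd1bot n)
    apply this.congr'
    filter_upwards [self_mem_nhdsWithin] with S hS
    exact (hd2 n S hS).symm
  -- each term tends to 0
  set Ke : ℝ := K * Real.exp (-r * (T - t)) with hKe
  have hKepos : 0 < Ke := by rw [hKe]; positivity
  have hterm : ∀ n, Tendsto (fun S => w n
      * (S * stdNormalCDF (d1 n S) - Ke * stdNormalCDF (d2 n S)))
      (nhdsWithin 0 (Set.Ioi 0)) (nhds 0) := by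
    intro n
    have h1 : Tendsto (fun S : ℝ => S * stdNormalCDF (d1 n S))
        (nhdsWithin 0 (Set.Ioi 0)) (nhds 0) := by
      apply squeeze_zero'
      · filter_upwards [self_mem_nhdsWithin] with S hS
        exact mul_nonneg (le_of_lt hS) (hΦ0 _)
      · filter_upwards [self_mem_nhdsWithin] with S hS
        calc S * stdNormalCDF (d1 n S) ≤ S * 1 :=
              mul_le_mul_of_nonneg_left (hΦ1 _) (le_of_lt hS)
          _ = S := mul_one S
      · exact tendsto_nhdsWithin_of_tendsto_nhds (Continuous.tendsto' continuous_id 0 0 rfl)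
    have h2 : Tendsto (fun S => stdNormalCDF (d2 n S))
        (nhdsWithin 0 (Set.Ioi 0)) (nhds 0) := hΦbot.comp (hd2bot n)
    have := ((h1.sub (h2.const_mul Ke)).const_mul (w n))
    simpa using this
  -- domination
  have hsum : Summable (fun n => w n * (K + Ke)) := by
    have h1 : Summable (fun n : ℕ => (lam' * (T - t)) ^ n / n.factorial) :=
      Real.summable_pow_div_factorial _
    have h2 : Summable w := by
      apply ((h1.mul_left (Real.exp (-lam' * (T - t))))).congr
      intro n
      rw [hw, mul_div_assoc]
    exact h2.mul_right _
  have hbound : ∀ᶠ S in nhdsWithin 0 (Set.Ioi 0), ∀ n,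
      ‖w n * (S * stdNormalCDF (d1 n S) - Ke * stdNormalCDF (d2 n S))‖ ≤ w n * (K + Ke) := by
    filter_upwards [Ioo_mem_nhdsGT_of_mem (Set.left_mem_Ico.2 hK)] with S hS n
    have hS0 : 0 < S := hS.1
    have hSK : S < K := hS.2
    rw [norm_mul, Real.norm_eq_abs, Real.norm_eq_abs, abs_of_nonneg (hwpos n)]
    apply mul_le_mul_of_nonneg_left _ (hwpos n)
    calc |S * stdNormalCDF (d1 n S) - Ke * stdNormalCDF (d2 n S)|
        ≤ |S * stdNormalCDF (d1 n S)| + |Ke * stdNormalCDF (d2 n S)| := abs_sub _ _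
      _ ≤ K + Ke := by
          apply add_le_add
          · rw [abs_of_nonneg (mul_nonneg hS0.le (hΦ0 _))]
            calc S * stdNormalCDF (d1 n S) ≤ S * 1 :=
                  mul_le_mul_of_nonneg_left (hΦ1 _) hS0.le
              _ ≤ K := by linarith [mul_one S]
          · rw [abs_of_nonneg (mul_nonneg hKepos.le (hΦ0 _))]
            calc Ke * stdNormalCDF (d2 n S) ≤ Ke * 1 :=
                  mul_le_mul_of_nonneg_left (hΦ1 _) hKepos.le
              _ = Ke := mul_one Ke
  have hmain : Tendsto (fun S => ∑' n, w n
      * (S * stdNormalCDF (d1 n S) - Ke * stdNormalCDF (d2 n S)))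
      (nhdsWithin 0 (Set.Ioi 0)) (nhds (∑' _ : ℕ, (0:ℝ))) :=
    tendsto_tsum_of_dominated_convergence hsum hterm hbound
  rw [tsum_zero] at hmain
  apply hmain.congr'
  filter_upwards [self_mem_nhdsWithin] with S hS
  rw [hC S hS]
end

section
/- Fix M>1. For δt ∈ (0, 1/M) define σ̂²(δt) = σ² + σ_H²(δt)^{2H−1} + k·√((2/π)(σ²/δt + σ_H²(δt)^{2H−2})). Then σ̂²(δt) → ∞ as δt → 0⁺, and there exists k₀ > 0 such that for all 0 < k < k₀ the function σ̂² attains its minimum on (0, 1/M): there exists δt* ∈ (0, 1/M) with σ̂²(δt*) ≤ σ̂²(δt) for all δt ∈ (0, 1/M). -/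
open Real Filter

lemma my_sqrt_atTop : Tendsto Real.sqrt atTop atTop := by
  refine tendsto_atTop_atTop.2 fun b => ⟨(max b 0) ^ 2, fun a ha => ?_⟩
  calc b ≤ max b 0 := le_max_left _ _
    _ = Real.sqrt ((max b 0) ^ 2) := (Real.sqrt_sq (le_max_right _ _)).symm
    _ ≤ Real.sqrt a := Real.sqrt_le_sqrt ha

/-- The modified volatility `σ̂²(δt)` blows up as `δt → 0⁺` (for any transaction cost `k > 0`),
and for all sufficiently small `k > 0` it attains its minimum on `(0, 1/M)`. -/
theorem mfm_modified_volatility_min_attained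
    (σ σH Hu M : ℝ)
    (hσ : 0 < σ) (hσH : 0 < σH) (hH1 : 3 / 4 < Hu) (hH2 : Hu < 1) (hM : 1 < M)
    (σhat2 : ℝ → ℝ → ℝ)
    (hσhat2 : ∀ k δt, 0 < δt → σhat2 k δt = σ ^ 2 + σH ^ 2 * δt ^ (2 * Hu - 1)
      + k * Real.sqrt ((2 / Real.pi) * (σ ^ 2 / δt + σH ^ 2 * δt ^ (2 * Hu - 2)))) :
    (∀ k, 0 < k → Tendsto (fun δt => σhat2 k δt) (nhdsWithin 0 (Set.Ioi 0)) atTop) ∧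
    ∃ k₀ > 0, ∀ k, 0 < k → k < k₀ →
      ∃ δs ∈ Set.Ioo 0 (1 / M), ∀ δt ∈ Set.Ioo 0 (1 / M), σhat2 k δs ≤ σhat2 k δt := by
  have hπ : 0 < Real.pi := Real.pi_pos
  have hp : 0 < 2 * Hu - 1 := by linarith
  have hMpos : (0:ℝ) < M := by linarith
  have main : ∀ k, 0 < k →
      Tendsto (fun δt => σhat2 k δt) (nhdsWithin 0 (Set.Ioi 0)) atTop := by
    intro k hk
    have h0 : Tendsto (fun δt : ℝ => σ ^ 2 / δt) (nhdsWithin 0 (Set.Ioi 0)) atTop := by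
      simpa [div_eq_mul_inv] using tendsto_inv_nhdsGT_zero.const_mul_atTop (pow_pos hσ 2)
    have h1 : Tendsto (fun δt : ℝ => (2 / Real.pi) * (σ ^ 2 / δt))
        (nhdsWithin 0 (Set.Ioi 0)) atTop := h0.const_mul_atTop (by positivity)
    have h2 : Tendsto (fun δt : ℝ => k * Real.sqrt ((2 / Real.pi) * (σ ^ 2 / δt)))
        (nhdsWithin 0 (Set.Ioi 0)) atTop := (my_sqrt_atTop.comp h1).const_mul_atTop hk
    refine tendsto_atTop_mono' _ ?_ h2
    filter_upwards [self_mem_nhdsWithin] with δt hδt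
    have hδt' : (0:ℝ) < δt := hδt
    rw [hσhat2 k δt hδt']
    have hB : (0:ℝ) ≤ σH ^ 2 * δt ^ (2 * Hu - 2) := by positivity
    have hs : Real.sqrt ((2 / Real.pi) * (σ ^ 2 / δt)) ≤
        Real.sqrt ((2 / Real.pi) * (σ ^ 2 / δt + σH ^ 2 * δt ^ (2 * Hu - 2))) := by
      apply Real.sqrt_le_sqrt
      apply mul_le_mul_of_nonneg_left (le_add_of_nonneg_right hB) (by positivity)
    calc k * Real.sqrt ((2 / Real.pi) * (σ ^ 2 / δt))
        ≤ k * Real.sqrt ((2 / Real.pi) * (σ ^ 2 / δt + σH ^ 2 * δt ^ (2 * Hu - 2))) :=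
          mul_le_mul_of_nonneg_left hs hk.le
      _ ≤ _ := le_add_of_nonneg_left (by positivity)
  refine ⟨main, ?_⟩
  set a : ℝ := 1 / (2 * M) with ha_def
  set b : ℝ := 3 / (4 * M) with hb_def
  have ha : 0 < a := by rw [ha_def]; positivity
  have hb : 0 < b := by rw [hb_def]; positivity
  have hab : a < b := by
    rw [ha_def, hb_def, div_lt_div_iff₀ (by positivity) (by positivity)]
    nlinarith
  have hbM : b < 1 / M := by
    rw [hb_def, div_lt_div_iff₀ (by positivity) hMpos]
    nlinarith
  set C : ℝ := Real.sqrt ((2 / Real.pi) * (σ ^ 2 / a + σH ^ 2 * a ^ (2 * Hu - 2)))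
    with hC_def
  have hC : 0 < C := by rw [hC_def]; apply Real.sqrt_pos.mpr; positivity
  set ε : ℝ := σH ^ 2 * (b ^ (2 * Hu - 1) - a ^ (2 * Hu - 1)) with hε_def
  have hε : 0 < ε := by
    rw [hε_def]
    exact mul_pos (by positivity) (sub_pos.mpr (Real.rpow_lt_rpow ha.le hab hp))
  refine ⟨ε / C, by positivity, ?_⟩
  intro k hk hkk₀
  have hkC : k * C < ε := (lt_div_iff₀ hC).mp hkk₀
  have hkey1 : σhat2 k a < σ ^ 2 + σH ^ 2 * b ^ (2 * Hu - 1) := by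
    rw [hσhat2 k a ha, ← hC_def]
    rw [hε_def] at hkC
    nlinarith
  have hkey2 : ∀ δt, b ≤ δt → 0 < δt →
      σ ^ 2 + σH ^ 2 * b ^ (2 * Hu - 1) ≤ σhat2 k δt := by
    intro δt hbδt hδt
    rw [hσhat2 k δt hδt]
    have h1 : σH ^ 2 * b ^ (2 * Hu - 1) ≤ σH ^ 2 * δt ^ (2 * Hu - 1) :=
      mul_le_mul_of_nonneg_left (Real.rpow_le_rpow hb.le hbδt hp.le) (sq_nonneg σH)
    have h2 : (0:ℝ) ≤ k * Real.sqrt ((2 / Real.pi) *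
        (σ ^ 2 / δt + σH ^ 2 * δt ^ (2 * Hu - 2))) := by positivity
    linarith
  have hev := (main k hk).eventually (eventually_gt_atTop (σhat2 k a))
  obtain ⟨u, hu, hsub⟩ := mem_nhdsGT_iff_exists_Ioo_subset.mp hev
  have hu0 : (0:ℝ) < u := hu
  set a' : ℝ := min u a with ha'_def
  have ha'0 : 0 < a' := lt_min hu0 ha
  have ha'a : a' ≤ a := min_le_right _ _
  have hconta : ContinuousOn (σhat2 k) (Set.Icc a' b) := by
    have hform : ContinuousOn (fun δt : ℝ => σ ^ 2 + σH ^ 2 * δt ^ (2 * Hu - 1)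
        + k * Real.sqrt ((2 / Real.pi) * (σ ^ 2 / δt + σH ^ 2 * δt ^ (2 * Hu - 2))))
        (Set.Icc a' b) := by
      intro x hx
      have hx0 : 0 < x := lt_of_lt_of_le ha'0 hx.1
      apply ContinuousAt.continuousWithinAt
      have c1 : ContinuousAt (fun y : ℝ => y ^ (2 * Hu - 1)) x :=
        Real.continuousAt_rpow_const x _ (Or.inl hx0.ne')
      have c2 : ContinuousAt (fun y : ℝ => y ^ (2 * Hu - 2)) x :=
        Real.continuousAt_rpow_const x _ (Or.inl hx0.ne')
      have c3 : ContinuousAt (fun y : ℝ => σ ^ 2 / y) x :=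
        continuousAt_const.div continuousAt_id hx0.ne'
      exact (continuousAt_const.add (c1.const_mul _)).add
        ((((c3.add (c2.const_mul _)).const_mul _).sqrt).const_mul _)
    exact hform.congr fun x hx => hσhat2 k x (lt_of_lt_of_le ha'0 hx.1)
  obtain ⟨δs, hδs, hmin⟩ := isCompact_Icc.exists_isMinOn
    (Set.nonempty_Icc.mpr (ha'a.trans hab.le)) hconta
  have hsa : σhat2 k δs ≤ σhat2 k a := hmin ⟨ha'a, hab.le⟩
  refine ⟨δs, ⟨lt_of_lt_of_le ha'0 hδs.1, lt_of_le_of_lt hδs.2 hbM⟩, ?_⟩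
  intro δt hδt
  rcases lt_or_ge δt a' with h | h
  · have hmem : δt ∈ Set.Ioo 0 u := ⟨hδt.1, lt_of_lt_of_le h (min_le_left _ _)⟩
    exact le_of_lt (lt_of_le_of_lt hsa (hsub hmem))
  · rcases le_or_gt δt b with h2 | h2
    · exact hmin ⟨h, h2⟩
    · have := hkey2 δt h2.le hδt.1
      linarith
end
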